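/- Let K be a field, S = K[x,y], b ≥ 2 an integer, k an integer with 1 ≤ k < b, and I = (x^{2b+1}, x^2 y^{2b-1}, y^{2b+1}) ⊆ S. For 0 ≤ j ≤ i ≤ k set u_{i,j} = x^{(2b+1)(k-i)+2(i-j)} y^{(2b+1)i-2(i-j)}. Then, ordering the pairs (i,j) lexicographically as (0,0), (1,0), (1,1), (2,0), …, (k,k-1), (k,k), the x-degrees of the monomials u_{i,j} are strictly decreasing along this order and the y-degrees are strictly increasing; in particular the monomials u_{i,j}, 0 ≤ j ≤ i ≤ k, form the minimal monomial generating set of I^k. -/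
import Mathlib


open MvPolynomial

/-- An ideal of a polynomial ring is *graded* (homogeneous) if it is generated by
homogeneous polynomials. -/
def IsGradedIdeal {n : ℕ} {K : Type*} [Field K]
    (I : Ideal (MvPolynomial (Fin n) K)) : Prop :=
  ∃ G : Set (MvPolynomial (Fin n) K),
    (∀ g ∈ G, ∃ d, g.IsHomogeneous d) ∧ I = Ideal.span G

/-- `vp I p` is the `v_p`-number of `I`: the least degree of a homogeneous
polynomial `f` with `I : f = p`. -/
noncomputable def vp {n : ℕ} {K : Type*} [Field K]
    (I p : Ideal (MvPolynomial (Fin n) K)) : ℕ :=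
  sInf {d | ∃ f : MvPolynomial (Fin n) K, f.IsHomogeneous d ∧
    Submodule.colon I (Ideal.span {f}) = p}

/-- `vnum I` is the `v`-number of `I`: the minimum of `vp I p` over the
associated primes `p` of `S/I`. -/
noncomputable def vnum {n : ℕ} {K : Type*} [Field K]
    (I : Ideal (MvPolynomial (Fin n) K)) : ℕ :=
  sInf {d | ∃ p ∈ associatedPrimes (MvPolynomial (Fin n) K) (MvPolynomial (Fin n) K ⧸ I),
    ∃ f : MvPolynomial (Fin n) K, f.IsHomogeneous d ∧
      Submodule.colon I (Ideal.span {f}) = p}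

/-- `astab I` is the index of ass-stability of `I`: the least `k₀ ≥ 1` such that
`Ass(I^k) = Ass(I^{k₀})` for all `k ≥ k₀`. -/
noncomputable def astab {n : ℕ} {K : Type*} [Field K]
    (I : Ideal (MvPolynomial (Fin n) K)) : ℕ :=
  sInf {k₀ | 1 ≤ k₀ ∧ ∀ k, k₀ ≤ k →
    associatedPrimes (MvPolynomial (Fin n) K) (MvPolynomial (Fin n) K ⧸ I ^ k)
      = associatedPrimes (MvPolynomial (Fin n) K) (MvPolynomial (Fin n) K ⧸ I ^ k₀)}

/-- `alphaDeg I` is the initial degree `α(I) = min {d : I_d ≠ 0}` of `I`. -/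
noncomputable def alphaDeg {n : ℕ} {K : Type*} [Field K]
    (I : Ideal (MvPolynomial (Fin n) K)) : ℕ :=
  sInf {d | ∃ f ∈ I, f ≠ 0 ∧ f.IsHomogeneous d}

/-- `vstab I` is the index of v-stability of `I`: the least `k₀ ≥ 1` such that
`v(I^k) = α(I)·k + c` for all `k ≥ k₀`, where `c` is the constant such that this
holds for all `k ≫ 0`. -/
noncomputable def vstab {n : ℕ} {K : Type*} [Field K]
    (I : Ideal (MvPolynomial (Fin n) K)) : ℕ :=
  sInf {k₀ | 1 ≤ k₀ ∧ ∃ c : ℤ, ∀ k, k₀ ≤ k →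
    (vnum (I ^ k) : ℤ) = (alphaDeg I : ℤ) * k + c}

/-- `assInf I` is the stable set of associated primes `Ass^∞(I)` of the powers of `I`. -/
def assInf {n : ℕ} {K : Type*} [Field K]
    (I : Ideal (MvPolynomial (Fin n) K)) : Set (Ideal (MvPolynomial (Fin n) K)) :=
  {p | ∃ k₀, ∀ k, k₀ ≤ k →
    p ∈ associatedPrimes (MvPolynomial (Fin n) K) (MvPolynomial (Fin n) K ⧸ I ^ k)}

/-- `astabP I p` is the least `k₀` such that `p ∈ Ass(I^k)` for all `k ≥ k₀`. -/
noncomputable def astabP {n : ℕ} {K : Type*} [Field K]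
    (I p : Ideal (MvPolynomial (Fin n) K)) : ℕ :=
  sInf {k₀ | ∀ k, k₀ ≤ k →
    p ∈ associatedPrimes (MvPolynomial (Fin n) K) (MvPolynomial (Fin n) K ⧸ I ^ k)}

/-- `vstabP I p` is the least `k₀` such that `p ∈ Ass(I^k)` and `v_p(I^k)` agrees
with its eventual linear function `a_p·k + b_p` for all `k ≥ k₀`. -/
noncomputable def vstabP {n : ℕ} {K : Type*} [Field K]
    (I p : Ideal (MvPolynomial (Fin n) K)) : ℕ :=
  sInf {k₀ | ∃ a b : ℤ, ∀ k, k₀ ≤ k →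
    p ∈ associatedPrimes (MvPolynomial (Fin n) K) (MvPolynomial (Fin n) K ⧸ I ^ k) ∧
    (vp (I ^ k) p : ℤ) = a * k + b}

/-- For `S = K[x,y]`, `b ≥ 2`, `1 ≤ k < b` and
`I = (x^{2b+1}, x^2 y^{2b-1}, y^{2b+1})`, the monomials
`u_{i,j} = x^{(2b+1)(k-i)+2(i-j)} y^{(2b+1)i-2(i-j)}`, `0 ≤ j ≤ i ≤ k`, have strictly
decreasing `x`-degrees and strictly increasing `y`-degrees along the lexicographic order
on pairs `(i,j)`; in particular, they form the minimal monomial generating set of `I^k`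
(they generate `I^k` and none divides another). -/

lemma key_mono (B k i j i' j' : ℕ) (hB : 2*k+2 ≤ B) (hj : j ≤ i) (hik : i ≤ k)
    (hj' : j' ≤ i') (hik' : i' ≤ k) (h : i < i' ∨ (i = i' ∧ j < j')) :
    B*(k-i') + 2*(i'-j') < B*(k-i) + 2*(i-j) ∧ B*i - 2*(i-j) < B*i' - 2*(i'-j') := by
  obtain ⟨m, rfl⟩ : ∃ m, i = j + m := ⟨i-j, by omega⟩
  obtain ⟨m', rfl⟩ : ∃ m', i' = j' + m' := ⟨i'-j', by omega⟩
  obtain ⟨n, hn⟩ : ∃ n, k = j + m + n := ⟨k - (j+m), by omega⟩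
  obtain ⟨n', hn'⟩ : ∃ n', k = j' + m' + n' := ⟨k - (j'+m'), by omega⟩
  obtain ⟨c, rfl⟩ : ∃ c, B = c + 2 := ⟨B - 2, by omega⟩
  have e1 : k - (j+m) = n := by omega
  have e2 : k - (j'+m') = n' := by omega
  have e3 : j + m - j = m := by omega
  have e4 : j' + m' - j' = m' := by omega
  rw [e1, e2, e3, e4]
  have ey : ∀ a b : ℕ, (c+2)*(a+b) - 2*b = c*(a+b) + 2*a := by
    intro a b
    rw [show (c+2)*(a+b) = c*(a+b) + 2*a + 2*b from by ring, Nat.add_sub_cancel]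
  rw [ey, ey]
  have hck : 2*k ≤ c := by omega
  rcases h with h | ⟨h, hjj⟩
  · constructor
    · have h1 : (c+2)*n' + (c+2) ≤ (c+2)*n := by
        have := Nat.mul_le_mul_left (c+2) (show n'+1 ≤ n by omega)
        rw [Nat.mul_add, Nat.mul_one] at this; exact this
      have h2 : 2*m' ≤ c := by omega
      linarith
    · have h1 : c*(j+m) + c ≤ c*(j'+m') := by
        have := Nat.mul_le_mul_left c (show (j+m)+1 ≤ j'+m' from h)
        rw [Nat.mul_add, Nat.mul_one] at this; exact this
      have h2 : 2*j < c := by omega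
      linarith
  · have hnn : n' = n := by omega
    have hmm : m' < m := by omega
    subst hnn
    constructor
    · linarith
    · rw [show j' + m' = j + m from by omega]
      linarith

lemma dvd_exponents {K : Type*} [Field K] (a c a' c' : ℕ)
    (h : (X 0 ^ a * X 1 ^ c : MvPolynomial (Fin 2) K) ∣ X 0 ^ a' * X 1 ^ c') :
    a ≤ a' ∧ c ≤ c' := by
  rw [X_pow_eq_monomial, X_pow_eq_monomial, X_pow_eq_monomial, X_pow_eq_monomial,
    monomial_mul, monomial_mul, monomial_dvd_monomial] at h
  rcases h with ⟨h1 | h1, -⟩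
  · exact absurd h1 (by norm_num)
  · rw [Finsupp.le_def] at h1
    have h0 := h1 0
    have h2 := h1 1
    simp [Finsupp.single_apply] at h0 h2
    exact ⟨h0, h2⟩

lemma umem_eq {K : Type*} [Field K] (c km m j : ℕ) :
    (X 0 ^ ((c+2)*km + 2*m) * X 1 ^ (c*m + (c+2)*j) : MvPolynomial (Fin 2) K)
      = (X 0 ^ (c+2))^km * (X 0 ^ 2 * X 1 ^ c)^m * (X 1 ^ (c+2))^j := by
  rw [mul_pow, ← pow_mul, ← pow_mul, ← pow_mul, ← pow_mul, pow_add, pow_add]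
  ring

theorem u_minimal_generators (K : Type*) [Field K] (b k : ℕ)
    (hb : 2 ≤ b) (hk1 : 1 ≤ k) (hkb : k < b)
    (I : Ideal (MvPolynomial (Fin 2) K))
    (hI : I = Ideal.span {X 0 ^ (2*b+1), X 0 ^ 2 * X 1 ^ (2*b-1), X 1 ^ (2*b+1)})
    (Dx Dy : ℕ → ℕ → ℕ)
    (hDx : ∀ i j, Dx i j = (2*b+1)*(k-i) + 2*(i-j))
    (hDy : ∀ i j, Dy i j = (2*b+1)*i - 2*(i-j))
    (u : ℕ → ℕ → MvPolynomial (Fin 2) K)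
    (hu : ∀ i j, u i j = X 0 ^ (Dx i j) * X 1 ^ (Dy i j)) :
    (∀ i j i' j', j ≤ i → i ≤ k → j' ≤ i' → i' ≤ k →
      (i < i' ∨ (i = i' ∧ j < j')) → Dx i' j' < Dx i j ∧ Dy i j < Dy i' j') ∧
    I ^ k = Ideal.span {v : MvPolynomial (Fin 2) K | ∃ i j : ℕ, j ≤ i ∧ i ≤ k ∧ v = u i j} ∧
    (∀ i j i' j', j ≤ i → i ≤ k → j' ≤ i' → i' ≤ k → (i, j) ≠ (i', j') →
      ¬ u i j ∣ u i' j') := by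
  obtain ⟨c, hc1, hc2⟩ : ∃ c, 2*b+1 = c+2 ∧ 2*b-1 = c := ⟨2*b-1, by omega, rfl⟩
  have umem : ∀ i j, j ≤ i → i ≤ k → u i j =
      (X 0 ^ (2*b+1) : MvPolynomial (Fin 2) K)^(k-i)
        * (X 0 ^ 2 * X 1 ^ (2*b-1))^(i-j) * (X 1 ^ (2*b+1))^j := by
    intro i j hji hik
    obtain ⟨m, rfl⟩ : ∃ m, i = j + m := ⟨i-j, by omega⟩
    rw [hu, hDx, hDy, hc1, hc2, show j + m - j = m from by omega,
      show (c+2)*(j+m) - 2*m = c*m + (c+2)*j from by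
        rw [show (c+2)*(j+m) = c*m + (c+2)*j + 2*m from by ring, Nat.add_sub_cancel]]
    exact umem_eq c (k-(j+m)) m j
  have hW : ∀ n : ℕ, I ^ n = Ideal.span {v : MvPolynomial (Fin 2) K | ∃ i j : ℕ,
      j ≤ i ∧ i ≤ n ∧ v = (X 0 ^ (2*b+1) : MvPolynomial (Fin 2) K)^(n-i)
        * (X 0 ^ 2 * X 1 ^ (2*b-1))^(i-j) * (X 1 ^ (2*b+1))^j} := by
    intro n
    induction n with
    | zero =>
      rw [pow_zero, Ideal.one_eq_top, eq_comm, Ideal.eq_top_iff_one]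
      exact Ideal.subset_span ⟨0, 0, le_refl 0, le_refl 0, by simp⟩
    | succ n ih =>
      rw [pow_succ, ih, hI, Ideal.span_mul_span']
      apply le_antisymm <;> rw [Ideal.span_le]
      · rintro v ⟨w, hw, g, hg, rfl⟩
        obtain ⟨i, j, hji, hin, rfl⟩ := hw
        simp only [Set.mem_insert_iff, Set.mem_singleton_iff] at hg
        apply Ideal.subset_span
        rcases hg with rfl | rfl | rfl
        · exact ⟨i, j, hji, by omega, by
            rw [show (n+1)-i = (n-i)+1 from by omega, pow_succ]; ring⟩
        · exact ⟨i+1, j, by omega, by omega, by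
            rw [show (n+1)-(i+1) = n-i from by omega,
              show (i+1)-j = (i-j)+1 from by omega, pow_succ]; ring⟩
        · exact ⟨i+1, j+1, by omega, by omega, by
            rw [show (n+1)-(i+1) = n-i from by omega,
              show (i+1)-(j+1) = i-j from by omega, pow_succ]; ring⟩
      · rintro v ⟨i, j, hji, hin1, rfl⟩
        by_cases hin : i ≤ n
        · rw [show ((X 0 ^ (2*b+1) : MvPolynomial (Fin 2) K)^((n+1)-i)
              * (X 0 ^ 2 * X 1 ^ (2*b-1))^(i-j) * (X 1 ^ (2*b+1))^j)
            = ((X 0 ^ (2*b+1) : MvPolynomial (Fin 2) K)^(n-i)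
              * (X 0 ^ 2 * X 1 ^ (2*b-1))^(i-j) * (X 1 ^ (2*b+1))^j) * X 0 ^ (2*b+1) from by
              rw [show (n+1)-i = (n-i)+1 from by omega, pow_succ]; ring]
          exact Ideal.subset_span
            (Set.mul_mem_mul ⟨i, j, hji, hin, rfl⟩ (Set.mem_insert _ _))
        · obtain rfl : i = n + 1 := by omega
          by_cases hjn : j ≤ n
          · rw [show ((X 0 ^ (2*b+1) : MvPolynomial (Fin 2) K)^((n+1)-(n+1))
                * (X 0 ^ 2 * X 1 ^ (2*b-1))^((n+1)-j) * (X 1 ^ (2*b+1))^j)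
              = ((X 0 ^ (2*b+1) : MvPolynomial (Fin 2) K)^(n-n)
                * (X 0 ^ 2 * X 1 ^ (2*b-1))^(n-j) * (X 1 ^ (2*b+1))^j)
                  * (X 0 ^ 2 * X 1 ^ (2*b-1)) from by
                rw [show (n+1)-(n+1) = n-n from by omega,
                  show (n+1)-j = (n-j)+1 from by omega, pow_succ]; ring]
            exact Ideal.subset_span (Set.mul_mem_mul ⟨n, j, hjn, le_refl n, rfl⟩
              (Set.mem_insert_iff.mpr (Or.inr (Set.mem_insert _ _))))
          · obtain rfl : j = n + 1 := by omega
            rw [show ((X 0 ^ (2*b+1) : MvPolynomial (Fin 2) K)^((n+1)-(n+1))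
                * (X 0 ^ 2 * X 1 ^ (2*b-1))^((n+1)-(n+1)) * (X 1 ^ (2*b+1))^(n+1))
              = ((X 0 ^ (2*b+1) : MvPolynomial (Fin 2) K)^(n-n)
                * (X 0 ^ 2 * X 1 ^ (2*b-1))^(n-n) * (X 1 ^ (2*b+1))^n)
                  * (X 1 ^ (2*b+1)) from by
                rw [show (n+1)-(n+1) = n-n from by omega, pow_succ]; ring]
            exact Ideal.subset_span (Set.mul_mem_mul ⟨n, n, le_refl n, le_refl n, rfl⟩
              (by simp))
  refine ⟨?_, ?_, ?_⟩
  · intro i j i' j' h1 h2 h3 h4 h5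
    rw [hDx, hDx, hDy, hDy]
    exact key_mono (2*b+1) k i j i' j' (by omega) h1 h2 h3 h4 h5
  · rw [hW k]
    congr 1
    ext v
    simp only [Set.mem_setOf_eq]
    constructor
    · rintro ⟨i, j, h1, h2, rfl⟩
      exact ⟨i, j, h1, h2, (umem i j h1 h2).symm⟩
    · rintro ⟨i, j, h1, h2, rfl⟩
      exact ⟨i, j, h1, h2, umem i j h1 h2⟩
  · intro i j i' j' h1 h2 h3 h4 hne hdvd
    rw [hu, hu] at hdvd
    obtain ⟨hx, hy⟩ := dvd_exponents _ _ _ _ hdvd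
    rw [hDx, hDx] at hx
    rw [hDy, hDy] at hy
    have hne' : ¬(i = i' ∧ j = j') := by
      intro ⟨e1, e2⟩; exact hne (by rw [e1, e2])
    have htri : (i < i' ∨ (i = i' ∧ j < j')) ∨ (i' < i ∨ (i' = i ∧ j' < j)) := by omega
    rcases htri with hlt | hlt
    · exact absurd hx (not_le.mpr (key_mono (2*b+1) k i j i' j'
        (by omega) h1 h2 h3 h4 hlt).1)
    · exact absurd hy (not_le.mpr (key_mono (2*b+1) k i' j' i j
        (by omega) h3 h4 h1 h2 hlt).2)
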